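/- Let n ≥ 2, let q be a prime power, and let p be a primitive prime divisor of q^n − 1, i.e. p divides q^n − 1 but p does not divide q^k − 1 for any k with 1 ≤ k < n. Then for every subgroup U of GL_n(F_q) of order p, the centralizer of U in GL_n(F_q) is cyclic of order q^n − 1. -/

import Mathlib

open Polynomial

universe u

lemma aux_deg {F : Type*} [Field F] [Fintype F] {p n : ℕ} (hp : p.Prime)
    (hprim : ∀ k, 1 ≤ k → k < n → ¬ p ∣ Fintype.card F ^ k - 1)
    {f : F[X]} (hf : Irreducible f)
    (hdvd : f ∣ X ^ p - 1) (hne : ¬ ((X - 1 : F[X]) ∣ f)) :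
    n ≤ f.natDegree := by
  by_contra hcon
  push_neg at hcon
  have : Fact (Irreducible f) := ⟨hf⟩
  have hf0 : f ≠ 0 := hf.ne_zero
  set K := AdjoinRoot f with hK
  have hfd : FiniteDimensional F K := (AdjoinRoot.powerBasis hf0).finite
  have : Finite K := Module.finite_of_finite F
  have : Fintype K := Fintype.ofFinite K
  have hrank : Module.finrank F K = f.natDegree := by
    rw [(AdjoinRoot.powerBasis hf0).finrank, AdjoinRoot.powerBasis_dim]
  have hcard : Fintype.card K = Fintype.card F ^ f.natDegree := by
    rw [Module.card_eq_pow_finrank (K := F) (V := K), hrank]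
  set r : K := AdjoinRoot.root f with hr
  have hroot : (Polynomial.aeval r) f = 0 := by
    rw [AdjoinRoot.aeval_eq]; exact AdjoinRoot.mk_self
  obtain ⟨c, hc⟩ := hdvd
  have hrp : r ^ p = 1 := by
    have := congrArg (Polynomial.aeval r) hc
    simp [hroot, sub_eq_zero] at this
    simpa using this
  have hr1 : r ≠ 1 := by
    intro h
    apply hne
    have h0 : (Polynomial.aeval (1 : K)) f = 0 := h ▸ hroot
    have h1 : f.eval 1 = 0 := by
      have h2 : (Polynomial.aeval ((algebraMap F K) (1 : F))) f = 0 := by simpa using h0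
      rw [Polynomial.aeval_algebraMap_eq_zero_iff] at h2
      simpa using h2
    have := Polynomial.dvd_iff_isRoot.mpr h1
    simpa using this
  have hord : orderOf r = p := by
    have hd : orderOf r ∣ p := orderOf_dvd_of_pow_eq_one hrp
    rcases (Nat.Prime.eq_one_or_self_of_dvd hp _ hd) with h | h
    · exact absurd (orderOf_eq_one_iff.mp h) hr1
    · exact h
  have hu : IsUnit r := IsUnit.of_mul_eq_one (r ^ (p - 1)) (by
    calc r * r ^ (p-1) = r ^ (p - 1 + 1) := (pow_succ' r (p-1)).symm
      _ = 1 := by rw [Nat.sub_add_cancel hp.one_le]; exact hrp)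
  have hpd : p ∣ Fintype.card K - 1 := by
    have h3 : orderOf hu.unit = p := by rw [← orderOf_units, hu.unit_spec, hord]
    have h4 : p ∣ Nat.card Kˣ := h3 ▸ orderOf_dvd_natCard hu.unit
    rwa [Nat.card_units, Nat.card_eq_fintype_card] at h4
  have hdegpos : 1 ≤ f.natDegree := hf.natDegree_pos
  exact hprim f.natDegree hdegpos hcon (hcard ▸ hpd)

lemma aux_minpoly {F : Type*} [Field F] [Fintype F] {p n : ℕ} (hp : p.Prime) (hn : 1 ≤ n)
    (hpF : (p : F) ≠ 0)
    (hprim : ∀ k, 1 ≤ k → k < n → ¬ p ∣ Fintype.card F ^ k - 1)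
    {M : Matrix (Fin n) (Fin n) F} (hMp : M ^ p = 1) (hM1 : M ≠ 1) :
    Irreducible (minpoly F M) ∧ (minpoly F M).natDegree = n := by
  have : Nonempty (Fin n) := ⟨⟨0, hn⟩⟩
  have hInt : IsIntegral F M := ⟨M.charpoly, M.charpoly_monic, M.aeval_self_charpoly⟩
  set μ := minpoly F M with hμ
  have hμ0 : μ ≠ 0 := minpoly.ne_zero hInt
  have hμmonic : μ.Monic := minpoly.monic hInt
  have haev : (Polynomial.aeval M) ((X : F[X]) ^ p - 1) = 0 := by
    simp [hMp]
  have hμdvd : μ ∣ (X : F[X]) ^ p - 1 := minpoly.dvd F M haev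
  have hsep : ((X : F[X]) ^ p - 1).Separable := by
    have := Polynomial.separable_X_pow_sub_C (1 : F) hpF one_ne_zero
    simpa using this
  have hsq : Squarefree ((X : F[X]) ^ p - 1) := hsep.squarefree
  have hμsq : Squarefree μ := hsq.squarefree_of_dvd hμdvd
  have hμdvdc : μ ∣ M.charpoly := minpoly.dvd F M M.aeval_self_charpoly
  have hdegle : μ.natDegree ≤ n := by
    have := Polynomial.natDegree_le_of_dvd hμdvdc M.charpoly_monic.ne_zero
    simpa [Matrix.charpoly_natDegree_eq_dim] using this
  have hdegpos : 0 < μ.natDegree := minpoly.natDegree_pos hInt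
  have hμnu : ¬ IsUnit μ := by
    intro h
    have := Polynomial.natDegree_eq_zero_of_isUnit h
    omega
  have hμne : μ ≠ X - 1 := by
    intro h
    apply hM1
    have h2 := minpoly.aeval F M
    rw [← hμ, h] at h2
    simp [sub_eq_zero] at h2
    exact h2
  have hX1 : ¬ IsUnit ((X : F[X]) - 1) := by
    intro h
    have := Polynomial.natDegree_eq_zero_of_isUnit h
    have h1 : ((X : F[X]) - 1).natDegree = 1 := by
      simpa using Polynomial.natDegree_X_sub_C (1 : F)
    omega
  -- find irreducible factor f of μ with ¬ (X-1 ∣ f)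
  obtain ⟨f, hfirr, hfdvd, hfne⟩ :
      ∃ f : F[X], Irreducible f ∧ f ∣ μ ∧ ¬ ((X - 1 : F[X]) ∣ f) := by
    by_cases hc : (X - 1 : F[X]) ∣ μ
    · obtain ⟨h, hh⟩ := hc
      have hhnu : ¬ IsUnit h := by
        intro hu
        obtain ⟨c, hcu, rfl⟩ := Polynomial.isUnit_iff.mp hu
        have hl := hμmonic
        rw [hh] at hl
        have : ((X : F[X]) - 1).Monic := Polynomial.monic_X_sub_C 1
        have hc1 : c = 1 := by
          have := hl.leadingCoeff
          rw [Polynomial.leadingCoeff_mul, Polynomial.leadingCoeff_C] at this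
          have h2 : ((X : F[X]) - 1).leadingCoeff = 1 := by
            simpa using Polynomial.leadingCoeff_X_sub_C (1 : F)
          rw [h2, one_mul] at this
          exact this
        apply hμne
        rw [hh, hc1, Polynomial.C_1, mul_one]
      have hh0 : h ≠ 0 := by
        intro h0; rw [h0, mul_zero] at hh; exact hμ0 hh
      obtain ⟨f, hfi, hfd⟩ := WfDvdMonoid.exists_irreducible_factor hhnu hh0
      refine ⟨f, hfi, hfd.trans ⟨X - 1, by rw [hh, mul_comm]⟩, ?_⟩
      intro hdf
      have : ((X : F[X]) - 1) * (X - 1) ∣ μ := by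
        rw [hh]
        exact mul_dvd_mul_left _ (hdf.trans hfd)
      exact hX1 (hμsq _ this)
    · obtain ⟨f, hfi, hfd⟩ := WfDvdMonoid.exists_irreducible_factor hμnu hμ0
      exact ⟨f, hfi, hfd, fun hdf => hc (hdf.trans hfd)⟩
  have hfn : n ≤ f.natDegree := aux_deg hp hprim hfirr (hfdvd.trans hμdvd) hfne
  have hfdeg : f.natDegree = μ.natDegree := by
    have h1 := Polynomial.natDegree_le_of_dvd hfdvd hμ0
    omega
  -- μ is associated to f
  obtain ⟨c, hc⟩ := hfdvd
  have hf0 : f ≠ 0 := hfirr.ne_zero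
  have hc0 : c ≠ 0 := by
    intro h0; rw [h0, mul_zero] at hc; exact hμ0 hc
  have hcd : c.natDegree = 0 := by
    have := Polynomial.natDegree_mul hf0 hc0
    rw [← hc] at this
    omega
  have hcu : IsUnit c := by
    rw [Polynomial.isUnit_iff]
    refine ⟨c.coeff 0, ?_, (Polynomial.eq_C_of_natDegree_eq_zero hcd).symm⟩
    have : c.coeff 0 ≠ 0 := by
      intro h0
      apply hc0
      rw [Polynomial.eq_C_of_natDegree_eq_zero hcd, h0, Polynomial.C_0]
    exact isUnit_iff_ne_zero.mpr this
  have hassoc : Associated f μ := ⟨hcu.unit, by rw [IsUnit.unit_spec]; exact hc.symm⟩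
  have hμirr : Irreducible μ := hassoc.irreducible hfirr
  refine ⟨hμirr, ?_⟩
  omega

lemma aux_commute {n : ℕ} {F : Type*} [Field F]
    {M A : Matrix (Fin n) (Fin n) F} (h : A * M = M * A) (g : F[X]) :
    A * (Polynomial.aeval M g) = (Polynomial.aeval M g) * A := by
  induction g using Polynomial.induction_on' with
  | add f g hf hg => simp [map_add, mul_add, add_mul, hf, hg]
  | monomial k a =>
      rw [Polynomial.aeval_monomial]
      have hpow : A * M ^ k = M ^ k * A := (Commute.pow_right h k)
      calc A * (algebraMap F _ a * M ^ k) = algebraMap F _ a * (A * M ^ k) := by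
            rw [← mul_assoc, ← Algebra.commutes a A, mul_assoc]
        _ = algebraMap F _ a * M ^ k * A := by rw [hpow, mul_assoc]

set_option maxHeartbeats 1000000 in
lemma aux_central {n : ℕ} (hn : 2 ≤ n) {F : Type u} [Field F] [Fintype F] (hq : 2 ≤ Fintype.card F)
    {M : Matrix (Fin n) (Fin n) F}
    (hirr : Irreducible (minpoly F M)) (hdeg : (minpoly F M).natDegree = n) :
    ∃ (R : Type u) (_ : Field R) (_ : Fintype R), Fintype.card R = Fintype.card F ^ n ∧
      ∃ ψ : R →+* Matrix (Fin n) (Fin n) F, Function.Injective ψ ∧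
        Set.range ψ = {A : Matrix (Fin n) (Fin n) F | A * M = M * A} := by
  classical
  have hn1 : (1:ℕ) ≤ n := by omega
  have : Nonempty (Fin n) := ⟨⟨0, by omega⟩⟩
  set μ := minpoly F M with hμ
  haveI : Fact (Irreducible μ) := ⟨hirr⟩
  have hμ0 : μ ≠ 0 := hirr.ne_zero
  set R := AdjoinRoot μ with hR
  letI : Field R := AdjoinRoot.instField
  haveI hfd : FiniteDimensional F R := (AdjoinRoot.powerBasis hμ0).finite
  haveI : Finite R := Module.finite_of_finite F
  letI : Fintype R := Fintype.ofFinite R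
  have hrank : Module.finrank F R = n := by
    rw [(AdjoinRoot.powerBasis hμ0).finrank, AdjoinRoot.powerBasis_dim, hdeg]
  have hcardR : Fintype.card R = Fintype.card F ^ n := by
    rw [Module.card_eq_pow_finrank (K := F) (V := R), hrank]
  -- the ring hom ψ
  have hker : ∀ a : F[X], a ∈ Ideal.span ({μ} : Set F[X]) →
      (Polynomial.aeval M).toRingHom a = 0 := by
    intro a ha
    rw [Ideal.mem_span_singleton] at ha
    obtain ⟨c, rfl⟩ := ha
    show (Polynomial.aeval M) (μ * c) = 0
    rw [map_mul, hμ, minpoly.aeval, zero_mul]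
  refine ⟨R, inferInstance, inferInstance, hcardR, ?_⟩
  set ψ : R →+* Matrix (Fin n) (Fin n) F :=
    Ideal.Quotient.lift (Ideal.span ({μ} : Set F[X])) (Polynomial.aeval M).toRingHom hker
    with hψ
  have hψmk : ∀ g : F[X], ψ (AdjoinRoot.mk μ g) = Polynomial.aeval M g := by
    intro g
    exact Ideal.Quotient.lift_mk _ _ _
  have hψinj : Function.Injective ψ := ψ.injective
  refine ⟨ψ, hψinj, ?_⟩
  set V : Type u := Fin n → F with hV
  set θ : R →+* Module.End F V :=
    ((Matrix.toLinAlgEquiv' : Matrix (Fin n) (Fin n) F ≃ₐ[F] Module.End F V)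
      ).toRingEquiv.toRingHom.comp ψ with hθ
  letI : Module R V := Module.compHom V θ
  have hsmul : ∀ (r : R) (v : V), r • v = (ψ r).mulVec v := by
    intro r v
    show (θ r) v = (ψ r).mulVec v
    exact Matrix.toLinAlgEquiv'_apply (ψ r) v
  haveI : Module.Finite R V := Module.Finite.of_finite
  have hcardV : Fintype.card V = Fintype.card F ^ n := by
    simp [hV]
  have h2qn : 2 ≤ Fintype.card F ^ n := le_trans hq (Nat.le_self_pow (by omega) _)
  have hfr : Module.finrank R V = 1 := by
    have h1 : Fintype.card V = Fintype.card R ^ Module.finrank R V :=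
      Module.card_eq_pow_finrank (K := R) (V := V)
    rw [hcardV, hcardR] at h1
    have h3 : (Fintype.card F ^ n) ^ 1 = (Fintype.card F ^ n) ^ Module.finrank R V := by
      rw [pow_one]; exact h1
    exact (Nat.pow_right_injective h2qn h3).symm
  set b : Module.Basis (Fin 1) R V := Module.finBasisOfFinrankEq R V hfr with hb
  have hspan : ∀ v : V, v = b.repr v 0 • b 0 := by
    intro v
    have := b.sum_repr v
    simpa [Fin.sum_univ_one] using this.symm
  -- R-linearity of commuting matrices
  have hRlin : ∀ (A : Matrix (Fin n) (Fin n) F), A * M = M * A →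
      ∀ (r : R) (v : V), A.mulVec (r • v) = r • A.mulVec v := by
    intro A hA r v
    obtain ⟨g, rfl⟩ := AdjoinRoot.mk_surjective r
    rw [hsmul, hsmul, hψmk, Matrix.mulVec_mulVec, Matrix.mulVec_mulVec,
      aux_commute hA g]
  -- range ψ ⊆ centralizer set
  have hsub : Set.range ψ ⊆ {A : Matrix (Fin n) (Fin n) F | A * M = M * A} := by
    rintro A ⟨r, rfl⟩
    obtain ⟨g, rfl⟩ := AdjoinRoot.mk_surjective r
    rw [hψmk]
    exact (aux_commute rfl g).symm
  -- cardinality bound on the centralizer set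
  have hinj : Function.Injective
      (fun A : {A : Matrix (Fin n) (Fin n) F // A * M = M * A} =>
        A.val.mulVec (b 0)) := by
    intro A A' hAA
    simp only at hAA
    apply Subtype.ext
    have hvec : ∀ v : V, A.val.mulVec v = A'.val.mulVec v := by
      intro v
      rw [hspan v, hRlin A.val A.prop, hRlin A'.val A'.prop, hAA]
    have := Matrix.toLin'.injective (LinearMap.ext (fun v => by
      simpa [Matrix.toLin'_apply] using hvec v))
    exact this
  have hcard_le : Nat.card {A : Matrix (Fin n) (Fin n) F // A * M = M * A}
      ≤ Fintype.card F ^ n := by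
    have := Nat.card_le_card_of_injective _ hinj
    rwa [Nat.card_eq_fintype_card (α := V), hcardV] at this
  have hcard_range : Nat.card (Set.range ψ) = Fintype.card F ^ n := by
    rw [← hcardR, ← Nat.card_eq_fintype_card]
    exact Nat.card_congr (Equiv.ofInjective ψ hψinj).symm
  refine Set.eq_of_subset_of_ncard_le hsub ?_ (Set.toFinite _)
  rw [← Nat.card_coe_set_eq, ← Nat.card_coe_set_eq, hcard_range]
  exact hcard_le


/-- For a primitive prime divisor `p` of `q^n - 1`, the centralizer of a subgroup of
order `p` in `GL_n(F_q)` is cyclic of order `q^n - 1`. -/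
theorem stmt_4 (n : ℕ) (hn : 2 ≤ n) (q : ℕ) (hq : IsPrimePow q)
    (F : Type*) [Field F] [Fintype F] (hF : Fintype.card F = q)
    (p : ℕ) (hp : p.Prime) (hdvd : p ∣ q ^ n - 1)
    (hprim : ∀ k : ℕ, 1 ≤ k → k < n → ¬ p ∣ q ^ k - 1)
    (U : Subgroup (Matrix.GeneralLinearGroup (Fin n) F)) (hU : Nat.card U = p) :
    IsCyclic (Subgroup.centralizer (U : Set (Matrix.GeneralLinearGroup (Fin n) F))) ∧
      Nat.card (Subgroup.centralizer (U : Set (Matrix.GeneralLinearGroup (Fin n) F))) =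
        q ^ n - 1 := by
  classical
  have : Nonempty (Fin n) := ⟨⟨0, by omega⟩⟩
  set G := Matrix.GeneralLinearGroup (Fin n) F with hG
  have hq2 : 2 ≤ q := hq.two_le
  have hqn2 : 2 ≤ q ^ n := le_trans hq2 (Nat.le_self_pow (by omega) _)
  -- find a generator u of U
  haveI hUfin : Finite U := Nat.finite_of_card_ne_zero (by rw [hU]; exact hp.pos.ne')
  haveI : Nontrivial U := by
    apply Finite.one_lt_card_iff_nontrivial.mp
    rw [hU]; exact hp.one_lt
  obtain ⟨x, hx1⟩ := exists_ne (1 : U)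
  have hordx : orderOf x = p := by
    have hdvd' : orderOf x ∣ p := hU ▸ orderOf_dvd_natCard x
    rcases hp.eq_one_or_self_of_dvd _ hdvd' with h | h
    · exact absurd (orderOf_eq_one_iff.mp h) hx1
    · exact h
  set u : G := (x : G) with hu
  have hordu : orderOf u = p := by rw [hu, Subgroup.orderOf_coe, hordx]
  have hUz : U = Subgroup.zpowers u := by
    refine (Subgroup.eq_of_le_of_card_ge (Subgroup.zpowers_le.mpr x.2) ?_).symm
    rw [hU, Nat.card_zpowers, hordu]
  -- membership in the centralizer
  have hmem : ∀ g : G, g ∈ Subgroup.centralizer (U : Set G) ↔ u * g = g * u := by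
    intro g
    rw [Subgroup.mem_centralizer_iff]
    constructor
    · intro h; exact h u (by rw [hUz]; exact Subgroup.mem_zpowers u)
    · intro h m hm
      rw [hUz] at hm
      obtain ⟨k, rfl⟩ := hm
      exact (Commute.zpow_left h k)
  -- the matrix M
  set M : Matrix (Fin n) (Fin n) F := (u : Matrix (Fin n) (Fin n) F) with hM
  have hup : u ^ p = 1 := by rw [← hordu]; exact pow_orderOf_eq_one u
  have hMp : M ^ p = 1 := by
    have h2 := congrArg Units.val hup
    rw [Units.val_pow_eq_pow_val, Units.val_one] at h2
    exact h2
  have hM1 : M ≠ 1 := by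
    intro h
    have hu1 : u = 1 := Units.ext h
    rw [hu1, orderOf_one] at hordu
    have := hp.one_lt
    omega
  -- p is invertible in F
  have hpF : (p : F) ≠ 0 := by
    intro h0
    haveI : CharP F (ringChar F) := ringChar.charP F
    have hlp : ringChar F ∣ p := (CharP.cast_eq_zero_iff F (ringChar F) p).mp h0
    have hlprime : (ringChar F).Prime := CharP.char_is_prime F (ringChar F)
    have hlep : ringChar F = p := (Nat.prime_dvd_prime_iff_eq hlprime hp).mp hlp
    obtain ⟨m, _, hm⟩ := FiniteField.card F (ringChar F)
    have hpq : p ∣ q := by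
      rw [← hF, hm, ← hlep]
      exact dvd_pow_self _ m.pos.ne'
    have hpqn : p ∣ q ^ n := hpq.trans (dvd_pow_self _ (by omega : n ≠ 0))
    have : p ∣ 1 := by
      have := Nat.dvd_sub hpqn hdvd
      rwa [Nat.sub_sub_self (by omega : 1 ≤ q ^ n)] at this
    have h4 := Nat.le_of_dvd one_pos this
    have h5 := hp.one_lt
    omega
  have hprim' : ∀ k, 1 ≤ k → k < n → ¬ p ∣ Fintype.card F ^ k - 1 := by
    intro k h1 h2
    rw [hF]
    exact hprim k h1 h2
  obtain ⟨hirr, hdeg⟩ := aux_minpoly hp (by omega) hpF hprim' hMp hM1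
  obtain ⟨R, _, _, hcardR, ψ, hψinj, hψrange⟩ :=
    aux_central hn (by rw [hF]; exact hq2) hirr hdeg
  -- the group homomorphism from Rˣ
  set Ψ : Rˣ →* G := Units.map ψ.toMonoidHom with hΨ
  have hΨinj : Function.Injective Ψ := by
    intro a b hab
    apply Units.ext
    apply hψinj
    have := congrArg Units.val hab
    exact this
  have hrange : Ψ.range = Subgroup.centralizer (U : Set G) := by
    ext g
    constructor
    · rintro ⟨r, rfl⟩
      rw [hmem]
      apply Units.ext
      rw [Units.val_mul, Units.val_mul]
      have h6 : ψ (r : R) ∈ {A : Matrix (Fin n) (Fin n) F | A * M = M * A} := by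
        rw [← hψrange]; exact Set.mem_range_self _
      have h6' : (ψ (r : R)) * M = M * ψ (r : R) := h6
      show M * (ψ (r : R)) = (ψ (r : R)) * M
      exact h6'.symm
    · intro hg
      rw [hmem] at hg
      have hgM : (g : Matrix (Fin n) (Fin n) F) * M = M * (g : Matrix (Fin n) (Fin n) F) := by
        have h7 := congrArg Units.val hg
        rw [Units.val_mul, Units.val_mul] at h7
        exact h7.symm
      have hc : Commute u g := hg
      have hginvM : ((g⁻¹ : G) : Matrix (Fin n) (Fin n) F) * M
          = M * ((g⁻¹ : G) : Matrix (Fin n) (Fin n) F) := by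
        have h8 := congrArg Units.val hc.inv_right.eq
        rw [Units.val_mul, Units.val_mul] at h8
        exact h8.symm
      have hmem1 : (g : Matrix (Fin n) (Fin n) F) ∈ Set.range ψ := by rw [hψrange]; exact hgM
      have hmem2 : ((g⁻¹ : G) : Matrix (Fin n) (Fin n) F) ∈ Set.range ψ := by
        rw [hψrange]; exact hginvM
      obtain ⟨r, hr⟩ := hmem1
      obtain ⟨r', hr'⟩ := hmem2
      refine ⟨⟨r, r', ?_, ?_⟩, ?_⟩
      · apply hψinj
        rw [map_mul, hr, hr', map_one]
        have := congrArg Units.val (mul_inv_cancel g)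
        rw [Units.val_mul] at this
        exact this
      · apply hψinj
        rw [map_mul, hr', hr, map_one]
        have := congrArg Units.val (inv_mul_cancel g)
        rw [Units.val_mul] at this
        exact this
      · exact Units.ext hr
  haveI : IsCyclic Rˣ := inferInstance
  set e : Rˣ ≃* Subgroup.centralizer (U : Set G) :=
    (MonoidHom.ofInjective hΨinj).trans (MulEquiv.subgroupCongr hrange) with he
  constructor
  · exact isCyclic_of_surjective e.toMonoidHom e.surjective
  · rw [← Nat.card_congr e.toEquiv, Nat.card_units, Nat.card_eq_fintype_card, hcardR, hF]
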